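/- Let w : [0,1) → (0,∞) be continuous with ∫₀¹ w finite, let a ∈ (0,1), and suppose δ : [0,1) → ℝ is continuous, integrable, bounded, and δ ≥ c > 0 on (a,1). Define Φ(x) = ∫₀¹ r^x δ(r) dr and Φ̃(x) = ∫_a¹ r^x δ(r) dr. Then Φ(x)/Φ̃(x) → 1 as x → ∞. -/

import Mathlib

open MeasureTheory Set Filter

/-- Truncation comparison for moment functions: if `δ` is continuous, integrable and
bounded on `[0,1)` with `δ ≥ c > 0` on `(a,1)`, and `Φ(x) = ∫₀¹ rˣ δ(r) dr`,
`Φ̃(x) = ∫ₐ¹ rˣ δ(r) dr`, then `Φ(x)/Φ̃(x) → 1` as `x → ∞`. -/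
theorem stmt18 (δ : ℝ → ℝ) (a c : ℝ) (ha : a ∈ Ioo (0:ℝ) 1) (hc : 0 < c)
    (hδ_cont : ContinuousOn δ (Ico (0:ℝ) 1))
    (hδ_int : IntegrableOn δ (Ioo (0:ℝ) 1))
    (hδ_bdd : ∃ B : ℝ, ∀ r ∈ Ico (0:ℝ) 1, |δ r| ≤ B)
    (hδ_lower : ∀ r ∈ Ioo a 1, c ≤ δ r)
    (Φ Φt : ℝ → ℝ)
    (hΦ : ∀ x, Φ x = ∫ r in Ioo (0:ℝ) 1, r ^ x * δ r)
    (hΦt : ∀ x, Φt x = ∫ r in Ioo a 1, r ^ x * δ r) :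
    Tendsto (fun x => Φ x / Φt x) atTop (nhds 1) := by
  obtain ⟨ha0, ha1⟩ := ha
  obtain ⟨B, hB⟩ := hδ_bdd
  have hB0 : 0 ≤ B := le_trans (abs_nonneg _) (hB a ⟨ha0.le, ha1⟩)
  set b : ℝ := (a + 1) / 2 with hbdef
  have hab : a < b := by rw [hbdef]; linarith
  have hb1 : b < 1 := by rw [hbdef]; linarith
  have hb0 : 0 < b := lt_trans ha0 hab
  have h1b : 0 < 1 - b := by linarith
  -- measurability
  have hmeas : ∀ x : ℝ,
      AEStronglyMeasurable (fun r => r ^ x * δ r) (volume.restrict (Ioo (0:ℝ) 1)) := by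
    intro x
    have h1 : ContinuousOn (fun r : ℝ => r ^ x) (Ioo 0 1) :=
      ContinuousOn.rpow_const continuousOn_id (fun r hr => Or.inl (ne_of_gt hr.1))
    have h2 : ContinuousOn δ (Ioo 0 1) := hδ_cont.mono Ioo_subset_Ico_self
    exact (h1.mul h2).aestronglyMeasurable measurableSet_Ioo
  -- integrability
  have hint : ∀ x : ℝ, 0 ≤ x → IntegrableOn (fun r => r ^ x * δ r) (Ioo (0:ℝ) 1) := by
    intro x hx
    apply Integrable.mono' hδ_int.norm (hmeas x)
    filter_upwards [ae_restrict_mem measurableSet_Ioo] with r hr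
    rw [norm_mul]
    have h1 : ‖r ^ x‖ ≤ 1 := by
      rw [Real.norm_eq_abs, abs_of_nonneg (Real.rpow_nonneg hr.1.le x)]
      exact Real.rpow_le_one hr.1.le hr.2.le hx
    calc ‖r ^ x‖ * ‖δ r‖ ≤ 1 * ‖δ r‖ := by gcongr
      _ = ‖δ r‖ := one_mul _
  -- splitting
  have hsplit : ∀ x : ℝ, 0 ≤ x →
      Φ x = (∫ r in Ioc (0:ℝ) a, r ^ x * δ r) + Φt x := by
    intro x hx
    have hU : Ioc (0:ℝ) a ∪ Ioo a 1 = Ioo 0 1 := by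
      ext r
      simp only [mem_union, mem_Ioc, mem_Ioo]
      constructor
      · rintro (⟨h1, h2⟩ | ⟨h1, h2⟩) <;> exact ⟨by linarith, by linarith⟩
      · rintro ⟨h1, h2⟩
        rcases le_or_gt r a with h | h
        · exact Or.inl ⟨h1, h⟩
        · exact Or.inr ⟨h, h2⟩
    have hd : Disjoint (Ioc (0:ℝ) a) (Ioo a 1) :=
      Set.disjoint_left.mpr fun r hr hr' => absurd hr.2 (not_le.mpr hr'.1)
    have hf1 : IntegrableOn (fun r => r ^ x * δ r) (Ioc (0:ℝ) a) :=
      (hint x hx).mono_set (fun r hr => ⟨hr.1, lt_of_le_of_lt hr.2 ha1⟩)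
    have hf2 : IntegrableOn (fun r => r ^ x * δ r) (Ioo a 1) :=
      (hint x hx).mono_set (Ioo_subset_Ioo ha0.le le_rfl)
    rw [hΦ x, hΦt x, ← hU, setIntegral_union hd measurableSet_Ioo hf1 hf2]
  -- tail bound
  have htail : ∀ x : ℝ, 0 ≤ x →
      |∫ r in Ioc (0:ℝ) a, r ^ x * δ r| ≤ a ^ x * B * a := by
    intro x hx
    have hm : AEStronglyMeasurable (fun r => r ^ x * δ r) (volume.restrict (Ioc (0:ℝ) a)) :=
      (hmeas x).mono_measure (Measure.restrict_mono
        (show Ioc (0:ℝ) a ⊆ Ioo 0 1 from fun r hr => ⟨hr.1, lt_of_le_of_lt hr.2 ha1⟩) le_rfl)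
    have hbd : ∀ r ∈ Ioc (0:ℝ) a, ‖r ^ x * δ r‖ ≤ a ^ x * B := by
      intro r hr
      rw [norm_mul, Real.norm_eq_abs, Real.norm_eq_abs,
        abs_of_nonneg (Real.rpow_nonneg hr.1.le x)]
      have h1 : r ^ x ≤ a ^ x := Real.rpow_le_rpow hr.1.le hr.2 hx
      have h2 : |δ r| ≤ B := hB r ⟨hr.1.le, lt_of_le_of_lt hr.2 ha1⟩
      exact mul_le_mul h1 h2 (abs_nonneg _) (Real.rpow_nonneg ha0.le x)
    have hvol : (volume (Ioc (0:ℝ) a)) < ⊤ := by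
      rw [Real.volume_Ioc]; exact ENNReal.ofReal_lt_top
    have := norm_setIntegral_le_of_norm_le_const hvol hbd
    rw [measureReal_def, Real.volume_Ioc, ENNReal.toReal_ofReal (by linarith)] at this
    simpa [Real.norm_eq_abs] using this
  -- lower bound
  have hlow : ∀ x : ℝ, 0 ≤ x → b ^ x * c * (1 - b) ≤ Φt x := by
    intro x hx
    rw [hΦt x]
    have hsub : Ioo b 1 ⊆ Ioo a 1 := Ioo_subset_Ioo hab.le le_rfl
    have hint2 : IntegrableOn (fun r => r ^ x * δ r) (Ioo a 1) :=
      (hint x hx).mono_set (Ioo_subset_Ioo ha0.le le_rfl)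
    have h1 : (∫ _r in Ioo b 1, b ^ x * c) ≤ ∫ r in Ioo b 1, r ^ x * δ r := by
      apply setIntegral_mono_on (integrableOn_const (by
        rw [Real.volume_Ioo]; exact ENNReal.ofReal_ne_top))
        (hint2.mono_set hsub) measurableSet_Ioo
      intro r hr
      have hδr : c ≤ δ r := hδ_lower r (hsub hr)
      have hrx : b ^ x ≤ r ^ x := Real.rpow_le_rpow hb0.le hr.1.le hx
      exact mul_le_mul hrx hδr hc.le (Real.rpow_nonneg (hb0.le.trans hr.1.le) x)
    have h2 : (∫ r in Ioo b 1, r ^ x * δ r) ≤ ∫ r in Ioo a 1, r ^ x * δ r := by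
      apply setIntegral_mono_set hint2 _ (HasSubset.Subset.eventuallyLE hsub)
      filter_upwards [ae_restrict_mem measurableSet_Ioo] with r hr
      have : c ≤ δ r := hδ_lower r hr
      have h0 : (0:ℝ) ≤ r ^ x := Real.rpow_nonneg (ha0.le.trans hr.1.le) x
      exact mul_nonneg h0 (hc.le.trans this)
    have heq : (∫ _r in Ioo b 1, b ^ x * c) = b ^ x * c * (1 - b) := by
      rw [setIntegral_const, measureReal_def, Real.volume_Ioo, ENNReal.toReal_ofReal h1b.le, smul_eq_mul]
      ring
    linarith [heq ▸ h1, h2]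
  -- conclude
  have hΦtpos : ∀ x : ℝ, 0 ≤ x → 0 < Φt x := by
    intro x hx
    refine lt_of_lt_of_le ?_ (hlow x hx)
    have := Real.rpow_pos_of_pos hb0 x
    positivity
  have key : Tendsto (fun x => Φ x / Φt x - 1) atTop (nhds 0) := by
    have h0 : Tendsto (fun x : ℝ => B * a / (c * (1 - b)) * (a / b) ^ x) atTop (nhds 0) := by
      have h0' : Tendsto (fun x : ℝ => (a / b) ^ x) atTop (nhds 0) := by
        apply tendsto_rpow_atTop_of_base_lt_one
        · have : 0 < a / b := div_pos ha0 hb0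
          linarith
        · rw [div_lt_one hb0]; exact hab
      simpa using (h0'.const_mul (B * a / (c * (1 - b))))
    apply squeeze_zero_norm' _ h0
    filter_upwards [eventually_ge_atTop (0:ℝ)] with x hx
    have hpos := hΦtpos x hx
    have heq : Φ x / Φt x - 1 = (∫ r in Ioc (0:ℝ) a, r ^ x * δ r) / Φt x := by
      rw [hsplit x hx]
      field_simp
      ring
    rw [heq, Real.norm_eq_abs, abs_div, abs_of_pos hpos]
    have h1 : |∫ r in Ioc (0:ℝ) a, r ^ x * δ r| / Φt x ≤
        (a ^ x * B * a) / (b ^ x * c * (1 - b)) := by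
      apply div_le_div₀ (by positivity) (htail x hx)
        (by have := Real.rpow_pos_of_pos hb0 x; positivity) (hlow x hx)
    refine h1.trans (le_of_eq ?_)
    rw [Real.div_rpow ha0.le hb0.le]
    have hbx : b ^ x ≠ 0 := (Real.rpow_pos_of_pos hb0 x).ne'
    field_simp
  have := key.add_const 1
  simpa using this
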